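/- The derivative of the Kummer function with respect to its first parameter satisfies ∂M/∂a(a,b,x) = Σ_{r=1}^∞ (a)_r x^r/((b)_r r!) · Σ_{m=1}^r 1/(m-1+a), valid for a > 0, b > 0, x real (the inner sum being Σ_{m=1}^r 1/(m-1+a) = ψ(a+r) - ψ(a) summed appropriately). -/

import Mathlib

/-- The Kummer confluent hypergeometric function `M(a,b,x)`, real parameters. -/
noncomputable def kummerM (a b x : ℝ) : ℝ :=
  ∑' n : ℕ, (ascPochhammer ℝ n).eval a / ((ascPochhammer ℝ n).eval b * n.factorial) * x ^ n

lemma ascPochhammer_eval_prod (n : ℕ) (a : ℝ) :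
    (ascPochhammer ℝ n).eval a = ∏ j ∈ Finset.range n, (a + j) := by
  induction n with
  | zero => simp
  | succ n ih => rw [ascPochhammer_succ_eval, ih, Finset.prod_range_succ]

lemma hasDerivAt_prodrange (n : ℕ) (a : ℝ) :
    HasDerivAt (fun a' : ℝ => ∏ j ∈ Finset.range n, (a' + j))
      (∑ i ∈ Finset.range n, ∏ j ∈ (Finset.range n).erase i, (a + j)) a := by
  have h := HasDerivAt.fun_finsetProd (u := Finset.range n)
      (f := fun i (a' : ℝ) => a' + (i : ℝ)) (f' := fun _ => (1 : ℝ)) (x := a)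
      (fun i _ => (hasDerivAt_id a).add_const _)
  simpa using h

lemma sum_prod_erase_eq (n : ℕ) (a : ℝ) (ha : 0 < a) :
    ∑ i ∈ Finset.range n, ∏ j ∈ (Finset.range n).erase i, (a + j)
      = (∏ j ∈ Finset.range n, (a + j)) * ∑ i ∈ Finset.range n, 1 / (a + i) := by
  rw [Finset.mul_sum]
  refine Finset.sum_congr rfl fun i hi => ?_
  have h0 : (a + (i : ℝ)) ≠ 0 := by positivity
  rw [mul_one_div, eq_div_iff h0, mul_comm]
  exact Finset.mul_prod_erase (Finset.range n) (fun j => (a + (j : ℝ))) hi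

/-- For `a, b > 0` and real `x`, the derivative of `M` with respect to its first
parameter is `∂M/∂a(a,b,x) = Σ_{r=1}^∞ (a)_r x^r/((b)_r r!) · Σ_{m=1}^r 1/(m-1+a)`.
(The sum over `r ≥ 1` is indexed by `r = n+1`, `n : ℕ`, and the inner sum
`Σ_{m=1}^{r} 1/(m-1+a) = Σ_{m=0}^{r-1} 1/(m+a)`.) -/
theorem kummerM_deriv_param (a b x : ℝ) (ha : 0 < a) (hb : 0 < b) :
    deriv (fun a' : ℝ => kummerM a' b x) a =
      ∑' n : ℕ,
        (ascPochhammer ℝ (n + 1)).eval a * x ^ (n + 1) /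
            ((ascPochhammer ℝ (n + 1)).eval b * (n + 1).factorial) *
          ∑ m ∈ Finset.range (n + 1), 1 / ((m : ℝ) + a) := by
  classical
  set m0 : ℝ := min b 1 with hm0
  have hm0pos : 0 < m0 := lt_min hb one_pos
  set K : ℝ := (a + 1) / m0 with hK
  have hKpos : 0 < K := div_pos (by linarith) hm0pos
  set y : ℝ := 2 * K * (|x| + 1) with hy
  have hypos : 0 < y := by positivity
  set u : ℕ → ℝ := fun n => y ^ n / n.factorial with hu_def
  have hu : Summable u := Real.summable_pow_div_factorial y
  -- the series and its termwise derivative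
  set g : ℕ → ℝ → ℝ := fun n a' =>
    (∏ j ∈ Finset.range n, (a' + j)) *
      (x ^ n / ((∏ j ∈ Finset.range n, (b + j)) * n.factorial)) with hg_def
  set g' : ℕ → ℝ → ℝ := fun n a' =>
    (∑ i ∈ Finset.range n, ∏ j ∈ (Finset.range n).erase i, (a' + j)) *
      (x ^ n / ((∏ j ∈ Finset.range n, (b + j)) * n.factorial)) with hg'_def
  have hgderiv : ∀ n (a' : ℝ), HasDerivAt (g n) (g' n a') a' := fun n a' =>
    (hasDerivAt_prodrange n a').mul_const _
  have hPbpos : ∀ n : ℕ, 0 < ∏ j ∈ Finset.range n, (b + (j : ℝ)) := fun n =>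
    Finset.prod_pos fun j _ => by positivity
  -- key product bound : ∏ (a+1+j) ≤ K^n ∏ (b+j)
  have hprodK : ∀ n : ℕ,
      (∏ j ∈ Finset.range n, (a + 1 + (j : ℝ))) ≤ K ^ n * ∏ j ∈ Finset.range n, (b + (j : ℝ)) := by
    intro n
    have hrw : K ^ n * ∏ j ∈ Finset.range n, (b + (j : ℝ))
        = ∏ j ∈ Finset.range n, (K * (b + (j : ℝ))) := by
      rw [Finset.prod_mul_distrib, Finset.prod_const, Finset.card_range]
    rw [hrw]
    refine Finset.prod_le_prod (fun j _ => by positivity) (fun j _ => ?_)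
    have hm0b : m0 ≤ b := min_le_left _ _
    have hm01 : m0 ≤ 1 := min_le_right _ _
    have hbj : m0 * (1 + (j : ℝ)) ≤ b + j := by
      have hj : (0:ℝ) ≤ j := Nat.cast_nonneg j
      nlinarith
    have : a + 1 + (j : ℝ) ≤ (a + 1) * (1 + j) := by
      have hj : (0:ℝ) ≤ j := Nat.cast_nonneg j
      nlinarith
    calc a + 1 + (j : ℝ) ≤ (a + 1) * (1 + j) := this
      _ = (a + 1) / m0 * (m0 * (1 + (j : ℝ))) := by field_simp
      _ ≤ (a + 1) / m0 * (b + j) := by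
          apply mul_le_mul_of_nonneg_left hbj (le_of_lt hKpos)
  -- bound on derivatives on Ioo 0 (a+1)
  have hbound : ∀ n (a' : ℝ), a' ∈ Set.Ioo (0 : ℝ) (a + 1) → ‖g' n a'‖ ≤ u n := by
    intro n a' ha'
    obtain ⟨ha'0, ha'1⟩ := ha'
    have hS : 0 ≤ ∑ i ∈ Finset.range n, ∏ j ∈ (Finset.range n).erase i, (a' + (j : ℝ)) :=
      Finset.sum_nonneg fun i _ => Finset.prod_nonneg fun j _ => by positivity
    have hSle : ∑ i ∈ Finset.range n, ∏ j ∈ (Finset.range n).erase i, (a' + (j : ℝ))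
        ≤ (n : ℝ) * ∏ j ∈ Finset.range n, (a + 1 + (j : ℝ)) := by
      calc ∑ i ∈ Finset.range n, ∏ j ∈ (Finset.range n).erase i, (a' + (j : ℝ))
          ≤ ∑ _i ∈ Finset.range n, ∏ j ∈ Finset.range n, (a + 1 + (j : ℝ)) := by
            refine Finset.sum_le_sum fun i hi => ?_
            calc ∏ j ∈ (Finset.range n).erase i, (a' + (j : ℝ))
                ≤ ∏ j ∈ (Finset.range n).erase i, (a + 1 + (j : ℝ)) :=
                  Finset.prod_le_prod (fun j _ => by positivity)
                    (fun j _ => by linarith)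
              _ ≤ ∏ j ∈ Finset.range n, (a + 1 + (j : ℝ)) := by
                  rw [← Finset.mul_prod_erase (Finset.range n)
                    (fun j => a + 1 + (j : ℝ)) hi]
                  have hnn : 0 ≤ ∏ j ∈ (Finset.range n).erase i, (a + 1 + (j : ℝ)) :=
                    Finset.prod_nonneg fun j _ => by positivity
                  have h1 : (1:ℝ) ≤ a + 1 + (i : ℝ) := by
                    have : (0:ℝ) ≤ (i : ℝ) := Nat.cast_nonneg i
                    linarith
                  nlinarith
        _ = (n : ℝ) * ∏ j ∈ Finset.range n, (a + 1 + (j : ℝ)) := by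
            rw [Finset.sum_const, Finset.card_range, nsmul_eq_mul]
    have hPb := hPbpos n
    have hfac : (0 : ℝ) < n.factorial := by positivity
    rw [hg'_def, Real.norm_eq_abs, abs_mul, abs_of_nonneg hS, abs_div, abs_pow,
      abs_of_pos (by positivity : (0:ℝ) < (∏ j ∈ Finset.range n, (b + (j:ℝ))) * n.factorial)]
    have h1 : (∑ i ∈ Finset.range n, ∏ j ∈ (Finset.range n).erase i, (a' + (j : ℝ)))
        * (|x| ^ n / ((∏ j ∈ Finset.range n, (b + (j:ℝ))) * n.factorial))
        ≤ ((n : ℝ) * (K ^ n * ∏ j ∈ Finset.range n, (b + (j : ℝ))))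
        * (|x| ^ n / ((∏ j ∈ Finset.range n, (b + (j:ℝ))) * n.factorial)) := by
      apply mul_le_mul_of_nonneg_right (hSle.trans ?_) (by positivity)
      exact mul_le_mul_of_nonneg_left (hprodK n) (Nat.cast_nonneg n)
    refine h1.trans ?_
    have h2 : ((n : ℝ) * (K ^ n * ∏ j ∈ Finset.range n, (b + (j : ℝ))))
        * (|x| ^ n / ((∏ j ∈ Finset.range n, (b + (j:ℝ))) * n.factorial))
        = (n : ℝ) * K ^ n * |x| ^ n / n.factorial := by
      field_simp
    rw [h2, hu_def]
    refine div_le_div_of_nonneg_right ?_ hfac.le |>.trans_eq rfl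
    have hn2 : (n : ℝ) ≤ 2 ^ n := by
      exact_mod_cast Nat.le_of_lt (Nat.lt_two_pow_self (n := n))
    calc (n : ℝ) * K ^ n * |x| ^ n ≤ 2 ^ n * K ^ n * (|x| + 1) ^ n := by
          have hx1 : |x| ^ n ≤ (|x| + 1) ^ n :=
            pow_le_pow_left₀ (abs_nonneg x) (by linarith) n
          have hKn : (0:ℝ) ≤ K ^ n := by positivity
          have h3 : (n:ℝ) * K ^ n ≤ 2 ^ n * K ^ n :=
            mul_le_mul_of_nonneg_right hn2 hKn
          have h4 : (n:ℝ) * K ^ n * |x| ^ n ≤ 2 ^ n * K ^ n * |x| ^ n :=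
            mul_le_mul_of_nonneg_right h3 (pow_nonneg (abs_nonneg x) n)
          have h5 : (2:ℝ) ^ n * K ^ n * |x| ^ n ≤ 2 ^ n * K ^ n * (|x| + 1) ^ n :=
            mul_le_mul_of_nonneg_left hx1 (by positivity)
          linarith
      _ = (2 * K * (|x| + 1)) ^ n := by rw [mul_pow, mul_pow]
      _ = y ^ n := by rw [hy]
  -- summability at the point a
  have hga : Summable fun n => g n a := by
    apply Summable.of_norm_bounded hu
    intro n
    have hgd : ‖g' (n+1) a‖ ≤ u (n+1) := hbound (n+1) a ⟨ha, lt_add_one a⟩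
    -- direct bound
    have hPb := hPbpos n
    have hfac : (0 : ℝ) < n.factorial := by positivity
    have hPa : (0:ℝ) ≤ ∏ j ∈ Finset.range n, (a + (j : ℝ)) :=
      Finset.prod_nonneg fun j _ => by positivity
    rw [hg_def, Real.norm_eq_abs, abs_mul, abs_of_nonneg hPa, abs_div, abs_pow,
      abs_of_pos (by positivity : (0:ℝ) < (∏ j ∈ Finset.range n, (b + (j:ℝ))) * n.factorial)]
    have hPale : (∏ j ∈ Finset.range n, (a + (j : ℝ)))
        ≤ K ^ n * ∏ j ∈ Finset.range n, (b + (j : ℝ)) := by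
      refine le_trans (Finset.prod_le_prod (fun j _ => by positivity)
        (fun j _ => by linarith : ∀ j ∈ Finset.range n, a + (j:ℝ) ≤ a + 1 + j)) (hprodK n)
    calc (∏ j ∈ Finset.range n, (a + (j : ℝ)))
          * (|x| ^ n / ((∏ j ∈ Finset.range n, (b + (j:ℝ))) * n.factorial))
        ≤ (K ^ n * ∏ j ∈ Finset.range n, (b + (j : ℝ)))
          * (|x| ^ n / ((∏ j ∈ Finset.range n, (b + (j:ℝ))) * n.factorial)) :=
          mul_le_mul_of_nonneg_right hPale (by positivity)
      _ = K ^ n * |x| ^ n / n.factorial := by field_simp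
      _ ≤ y ^ n / n.factorial := by
          apply div_le_div_of_nonneg_right ?_ hfac.le
          calc K ^ n * |x| ^ n = (K * |x|) ^ n := (mul_pow _ _ _).symm
            _ ≤ y ^ n := by
                apply pow_le_pow_left₀ (by positivity)
                rw [hy]; nlinarith [abs_nonneg x]
  -- the main derivative statement
  have hmem : a ∈ Set.Ioo (0 : ℝ) (a + 1) := ⟨ha, lt_add_one a⟩
  have hDeriv : HasDerivAt (fun a' => ∑' n, g n a') (∑' n, g' n a) a :=
    hasDerivAt_tsum_of_isPreconnected hu isOpen_Ioo isPreconnected_Ioo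
      (fun n a' ha' => hgderiv n a') (fun n a' ha' => hbound n a' ha') hmem hga hmem
  have hfun : (fun a' : ℝ => kummerM a' b x) = fun a' => ∑' n, g n a' := by
    funext a'
    refine tsum_congr fun n => ?_
    rw [hg_def]
    simp only [ascPochhammer_eval_prod]
    ring
  rw [hfun, hDeriv.deriv]
  -- now reindex the sum
  have hg'sum : Summable fun n => g' n a :=
    Summable.of_norm_bounded hu fun n => hbound n a hmem
  rw [Summable.tsum_eq_zero_add hg'sum]
  have hg'0 : g' 0 a = 0 := by simp [hg'_def]
  rw [hg'0, zero_add]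
  refine tsum_congr fun n => ?_
  rw [hg'_def]
  simp only [sum_prod_erase_eq (n+1) a ha, ascPochhammer_eval_prod]
  have hsums : ∑ i ∈ Finset.range (n+1), 1 / (a + (i:ℝ))
      = ∑ m ∈ Finset.range (n + 1), 1 / ((m : ℝ) + a) :=
    Finset.sum_congr rfl fun i _ => by rw [add_comm]
  rw [hsums]
  ring
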